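/- Let σ = (σ_1, …, σ_r) ∈ ℤ^r be a changemaker vector with n = ‖σ‖ = Σ_{i=1}^r σ_i², and suppose the integer changemaker lattice L = ⟨σ⟩^⊥ ⊆ ℤ^r admits an obtuse superbase v_0, …, v_{r−1}. Then for every index j and every coordinate index k with 1 ≤ k ≤ r, one has (v_j)_k² + σ_k² ≤ n, i.e. |(v_j)_k| ≤ √(n − σ_k²). -/

import Mathlib

/-- The standard dot product on `ℤ^s`. -/
def dotInt {s : ℕ} (x y : Fin s → ℤ) : ℤ := ∑ i, x i * y i

/-- `σ` is a changemaker vector: `σ 0 = 1` (the first coordinate, 1-based `σ_1`) and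
`σ_{i-1} ≤ σ_i ≤ 1 + σ_1 + ⋯ + σ_{i-1}` for all later coordinates. -/
def IsChangemaker {r : ℕ} (σ : Fin r → ℤ) : Prop :=
  (∀ i : Fin r, i.val = 0 → σ i = 1) ∧
  ∀ i : Fin r, 0 < i.val →
    σ ⟨i.val - 1, lt_of_le_of_lt (Nat.sub_le _ _) i.isLt⟩ ≤ σ i ∧
    σ i ≤ 1 + ∑ j ∈ Finset.univ.filter (fun j : Fin r => j < i), σ j

/-- `v` is an obtuse superbase of the sublattice `L ⊆ ℤ^s`: all its members lie in `L`,
they span `L` over `ℤ`, they have pairwise nonpositive dot products, and they sum to zero. -/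
def IsObtuseSuperbase {s d : ℕ} (L : Set (Fin s → ℤ)) (v : Fin d → (Fin s → ℤ)) : Prop :=
  (∀ i, v i ∈ L) ∧
  (∀ x ∈ L, x ∈ Submodule.span ℤ (Set.range v)) ∧
  (∀ i j, i ≠ j → dotInt (v i) (v j) ≤ 0) ∧
  (∑ i, v i) = 0

/-- `v` is a nonzero vector of the changemaker lattice `⟨σ⟩^⊥` which is irreducible:
whenever `v = x + y` with `x, y` nonzero members of the lattice, `x · y ≤ -1`. -/
def IsIrreducibleVec {r : ℕ} (σ : Fin r → ℤ) (v : Fin r → ℤ) : Prop :=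
  v ≠ 0 ∧ ∀ x y : Fin r → ℤ, dotInt σ x = 0 → dotInt σ y = 0 → x ≠ 0 → y ≠ 0 →
    x + y = v → dotInt x y ≤ -1

/-- A changemaker vector is tight if some coefficient `σ_k` (with `k ≥ 2`, 1-based)
equals `1 + σ_1 + ⋯ + σ_{k-1}`. -/
def IsTightCM {r : ℕ} (σ : Fin r → ℤ) : Prop :=
  ∃ k : Fin r, 0 < k.val ∧
    σ k = 1 + ∑ j ∈ Finset.univ.filter (fun j : Fin r => j < k), σ j

/-- A changemaker vector is very slack if its last coordinate is at least `2` and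
`σ_k ≤ σ_1 + ⋯ + σ_{k-1} - 1` for every `k` with `σ_k > 1`. -/
def IsVerySlack {r : ℕ} (σ : Fin r → ℤ) : Prop :=
  IsChangemaker σ ∧ (∀ i : Fin r, i.val = r - 1 → 2 ≤ σ i) ∧
  ∀ k : Fin r, 1 < σ k →
    σ k ≤ (∑ j ∈ Finset.univ.filter (fun j : Fin r => j < k), σ j) - 1

open Matrix Finset
namespace ObtuseAux


/-- A matrix whose rows all sum to zero is singular. -/
lemma det_eq_zero_of_rowsums_zero {n : ℕ} (M : Matrix (Fin (n+1)) (Fin (n+1)) ℤ)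
    (h : ∀ k, ∑ l, M k l = 0) : M.det = 0 := by
  rw [← Matrix.exists_mulVec_eq_zero_iff]
  refine ⟨fun _ => 1, ?_, ?_⟩
  · intro hz
    have := congrFun hz 0
    simp at this
  · funext k
    simpa [Matrix.mulVec, dotProduct] using h k

/-- Cofactor: replacing row `i` by the `i`-th standard basis vector. -/
lemma det_updateRow_single {n : ℕ} (M : Matrix (Fin (n+1)) (Fin (n+1)) ℤ) (i : Fin (n+1)) :
    (M.updateRow i (Pi.single i 1)).det = (M.submatrix i.succAbove i.succAbove).det := by
  rw [Matrix.det_succ_row _ i, Finset.sum_eq_single i]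
  · rw [Matrix.submatrix_updateRow_succAbove]
    simp [Even.neg_one_pow (Even.add_self (i : ℕ))]
  · intro j _ hj
    rw [Matrix.updateRow_self]
    rw [Pi.single_eq_of_ne hj]
    ring
  · intro h
    exact absurd (Finset.mem_univ i) h

/-- Multilinearity split used for deletion-contraction. -/
lemma det_split {n : ℕ} (M : Matrix (Fin (n+1)) (Fin (n+1)) ℤ) (i : Fin (n+1)) (c : ℤ) :
    M.det = (M.updateRow i (fun l => M i l - c * (Pi.single i 1 : Fin (n+1) → ℤ) l)).det
      + c * (M.submatrix i.succAbove i.succAbove).det := by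
  have hrow : M i = (fun l => M i l - c * (Pi.single i 1 : Fin (n+1) → ℤ) l) + c • Pi.single i 1 := by
    funext l
    simp [smul_eq_mul]
  calc M.det = (M.updateRow i (M i)).det := by rw [Matrix.updateRow_eq_self]
    _ = (M.updateRow i ((fun l => M i l - c * (Pi.single i 1 : Fin (n+1) → ℤ) l) + c • Pi.single i 1)).det := by
        rw [← hrow]
    _ = (M.updateRow i (fun l => M i l - c * (Pi.single i 1 : Fin (n+1) → ℤ) l)).det
        + (M.updateRow i (c • Pi.single i 1)).det := Matrix.det_updateRow_add ..
    _ = _ := by rw [Matrix.det_updateRow_smul, det_updateRow_single]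

/-- Row sums of the principal submatrix. -/
lemma rowsum_submatrix {n : ℕ} (M : Matrix (Fin (n+1)) (Fin (n+1)) ℤ) (i : Fin (n+1)) (k : Fin n) :
    ∑ l, M.submatrix i.succAbove i.succAbove k l
      = (∑ l, M (i.succAbove k) l) - M (i.succAbove k) i := by
  rw [Fin.sum_univ_succAbove (fun l => M (i.succAbove k) l) i]
  simp

/-- Claim E: an integer matrix with nonpositive off-diagonal entries and
nonnegative row sums has nonnegative determinant. -/
lemma detE : ∀ (m : ℕ) (M : Matrix (Fin m) (Fin m) ℤ),
    (∀ k l, k ≠ l → M k l ≤ 0) → (∀ k, 0 ≤ ∑ l, M k l) → 0 ≤ M.det := by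
  intro m
  induction m with
  | zero => intro M _ _; simp [Matrix.det_fin_zero]
  | succ n ih =>
    suffices H : ∀ (S : ℕ) (M : Matrix (Fin (n+1)) (Fin (n+1)) ℤ),
        (∀ k l, k ≠ l → M k l ≤ 0) → (∀ k, 0 ≤ ∑ l, M k l) →
        (∑ k, ∑ l, M k l).toNat ≤ S → 0 ≤ M.det by
      intro M h1 h2
      exact H _ M h1 h2 le_rfl
    intro S
    induction S with
    | zero =>
      intro M h1 h2 hS
      have htot : ∑ k, ∑ l, M k l = 0 := by
        have h0 : 0 ≤ ∑ k, ∑ l, M k l := Finset.sum_nonneg fun k _ => h2 k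
        omega
      have hall : ∀ k, ∑ l, M k l = 0 := by
        intro k
        have := (Finset.sum_eq_zero_iff_of_nonneg (fun k _ => h2 k)).mp htot
        exact this k (Finset.mem_univ k)
      rw [det_eq_zero_of_rowsums_zero M hall]
    | succ S ihS =>
      intro M h1 h2 hS
      by_cases hall : ∀ k, ∑ l, M k l = 0
      · rw [det_eq_zero_of_rowsums_zero M hall]
      · push_neg at hall
        obtain ⟨i, hi⟩ := hall
        have hsi : 1 ≤ ∑ l, M i l := by
          have := h2 i
          omega
        set M1 := M.updateRow i (fun l => M i l - 1 * (Pi.single i 1 : Fin (n+1) → ℤ) l) with hM1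
        have hM1row : ∀ k, ∑ l, M1 k l = (∑ l, M k l) - (if k = i then 1 else 0) := by
          intro k
          by_cases hk : k = i
          · subst hk
            simp only [hM1, Matrix.updateRow_self, if_pos rfl]
            rw [Finset.sum_sub_distrib]
            congr 1
            simp [Pi.single_apply, Finset.sum_ite_eq']
          · simp [hM1, Matrix.updateRow_ne hk, hk]
        have hM1off : ∀ k l, k ≠ l → M1 k l ≤ 0 := by
          intro k l hkl
          by_cases hk : k = i
          · have hil : i ≠ l := hk ▸ hkl
            rw [hk]
            simp only [hM1, Matrix.updateRow_self]
            have h0 : (Pi.single i 1 : Fin (n+1) → ℤ) l = 0 := Pi.single_eq_of_ne (Ne.symm hil) 1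
            rw [h0]
            simpa using h1 i l hil
          · simpa [hM1, Matrix.updateRow_ne hk] using h1 k l hkl
        have hM1rs : ∀ k, 0 ≤ ∑ l, M1 k l := by
          intro k
          rw [hM1row k]
          by_cases hk : k = i
          · subst hk; simp; omega
          · simp [hk]; exact h2 k
        have hM1tot : (∑ k, ∑ l, M1 k l) = (∑ k, ∑ l, M k l) - 1 := by
          rw [Finset.sum_congr rfl (fun k _ => hM1row k), Finset.sum_sub_distrib]
          congr 1
          rw [Finset.sum_ite_eq' Finset.univ i (fun _ => (1:ℤ))]
          simp
        have h1det : 0 ≤ M1.det := by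
          apply ihS M1 hM1off hM1rs
          have h0 : 0 ≤ ∑ k, ∑ l, M k l :=
            Finset.sum_nonneg fun k _ => h2 k
          omega
        have h2det : 0 ≤ (M.submatrix i.succAbove i.succAbove).det := by
          apply ih
          · intro k l hkl
            exact h1 _ _ (fun h => hkl (Fin.succAbove_right_injective h))
          · intro k
            rw [rowsum_submatrix M i k]
            have := h1 (i.succAbove k) i (Fin.succAbove_ne i k)
            have := h2 (i.succAbove k)
            omega
        rw [det_split M i 1, ← hM1]
        omega



/-- If a symmetric matrix has an "ungrounded" set of indices, it is singular. -/
lemma det_eq_zero_of_ungrounded {m : ℕ} (M : Matrix (Fin m) (Fin m) ℤ)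
    (hsym : ∀ k l, M k l = M l k) (T : Finset (Fin m)) (hT : T.Nonempty)
    (hrs : ∀ k ∈ T, ∑ l, M k l = 0) (hout : ∀ k ∈ T, ∀ l, l ∉ T → M k l = 0) :
    M.det = 0 := by
  rw [← Matrix.exists_mulVec_eq_zero_iff]
  obtain ⟨k0, hk0⟩ := hT
  refine ⟨fun t => if t ∈ T then 1 else 0, ?_, ?_⟩
  · intro h
    have := congrFun h k0
    simp [hk0] at this
  · funext k
    have hz : (M *ᵥ fun t => if t ∈ T then (1:ℤ) else 0) k = ∑ l ∈ T, M k l := by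
      simp only [Matrix.mulVec, dotProduct, mul_ite, mul_one, mul_zero]
      rw [Finset.sum_ite_mem, Finset.univ_inter]
    rw [hz]
    by_cases hk : k ∈ T
    · have h1 : ∑ l ∈ T, M k l + ∑ l ∈ Tᶜ, M k l = ∑ l, M k l :=
        Finset.sum_add_sum_compl T (M k)
      have h2 : ∑ l ∈ Tᶜ, M k l = 0 :=
        Finset.sum_eq_zero fun l hl => hout k hk l (Finset.mem_compl.mp hl)
      have h3 := hrs k hk
      simp only [Pi.zero_apply]
      omega
    · simp only [Pi.zero_apply]
      exact Finset.sum_eq_zero fun l hl => (hsym k l).trans (hout l hl k hk)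

/-- Conversely, a singular matrix of this shape has an ungrounded set. -/
lemma exists_ungrounded_of_det_eq_zero {m : ℕ} (M : Matrix (Fin m) (Fin m) ℤ)
    (hoff : ∀ k l, k ≠ l → M k l ≤ 0) (hrs : ∀ k, 0 ≤ ∑ l, M k l)
    (hdet : M.det = 0) :
    ∃ T : Finset (Fin m), T.Nonempty ∧ (∀ k ∈ T, ∑ l, M k l = 0) ∧
      (∀ k ∈ T, ∀ l, l ∉ T → M k l = 0) := by
  obtain ⟨x, hx0, hxk⟩ := Matrix.exists_mulVec_eq_zero_iff.mpr hdet
  obtain ⟨k1, hk1⟩ : ∃ k, x k ≠ 0 := by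
    by_contra h
    push_neg at h
    exact hx0 (funext h)
  obtain ⟨y, hyk, hy1⟩ : ∃ y : Fin m → ℤ, M *ᵥ y = 0 ∧ 0 < y k1 := by
    rcases lt_or_gt_of_ne hk1 with h | h
    · refine ⟨-x, ?_, by simpa using h⟩
      rw [Matrix.mulVec_neg, hxk, neg_zero]
    · exact ⟨x, hxk, h⟩
  have hmne : (Finset.univ : Finset (Fin m)).Nonempty := ⟨k1, Finset.mem_univ k1⟩
  obtain ⟨k0, -, hmax⟩ := Finset.exists_max_image Finset.univ y hmne
  set c := y k0 with hc
  have hcpos : 0 < c := lt_of_lt_of_le hy1 (hmax k1 (Finset.mem_univ k1))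
  have key : ∀ k, y k = c → (∑ l, M k l = 0 ∧ ∀ l, y l ≠ c → M k l = 0) := by
    intro k hk
    have hrow : ∑ l, M k l * y l = 0 := by
      have := congrFun hyk k
      simpa [Matrix.mulVec, dotProduct] using this
    have e1 : ∑ l, M k l * (c - y l) = c * (∑ l, M k l) := by
      simp only [mul_sub]
      rw [Finset.sum_sub_distrib, hrow, sub_zero, Finset.mul_sum]
      exact Finset.sum_congr rfl fun l _ => mul_comm _ _
    have hterm : ∀ l, M k l * (c - y l) ≤ 0 := by
      intro l
      by_cases hlk : l = k
      · subst hlk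
        rw [hk]
        simp
      · have h1 : M k l ≤ 0 := hoff k l (Ne.symm hlk)
        have h2 : 0 ≤ c - y l := sub_nonneg.mpr (hmax l (Finset.mem_univ l))
        nlinarith
    have hsum0 : ∑ l, M k l * (c - y l) ≤ 0 :=
      Finset.sum_nonpos fun l _ => hterm l
    have hs0 : ∑ l, M k l = 0 := by
      have h1 : c * (∑ l, M k l) ≤ 0 := e1 ▸ hsum0
      nlinarith [hrs k]
    refine ⟨hs0, fun l hl => ?_⟩
    have hall : ∑ l, M k l * (c - y l) = 0 := by rw [e1, hs0, mul_zero]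
    have heach := (Finset.sum_eq_zero_iff_of_nonpos fun l _ => hterm l).mp hall l
      (Finset.mem_univ l)
    rcases mul_eq_zero.mp heach with h | h
    · exact h
    · exact absurd (by linarith [sub_eq_zero.mp h] : y l = c) hl
  refine ⟨Finset.univ.filter (fun k => y k = c), ⟨k0, by simp [hc]⟩, ?_, ?_⟩
  · intro k hk
    exact (key k (by simpa using hk)).1
  · intro k hk l hl
    exact (key k (by simpa using hk)).2 l (by simpa using hl)

/-- Deleting a row/column (contraction) preserves nonsingularity. -/
lemma det_submatrix_ne_zero {n : ℕ} (M : Matrix (Fin (n+1)) (Fin (n+1)) ℤ)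
    (hsym : ∀ k l, M k l = M l k) (hoff : ∀ k l, k ≠ l → M k l ≤ 0)
    (hrs : ∀ k, 0 ≤ ∑ l, M k l) (hdet : M.det ≠ 0) (i : Fin (n+1)) :
    (M.submatrix i.succAbove i.succAbove).det ≠ 0 := by
  intro h2
  set M2 := M.submatrix i.succAbove i.succAbove with hM2
  have hrs2 : ∀ k, ∑ l, M2 k l = (∑ l, M (i.succAbove k) l) - M (i.succAbove k) i := by
    intro k
    rw [hM2]
    rw [Fin.sum_univ_succAbove (fun l => M (i.succAbove k) l) i]
    simp
  obtain ⟨T, hTne, hT1, hT2⟩ := exists_ungrounded_of_det_eq_zero M2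
    (fun k l hkl => hoff _ _ (fun h => hkl (Fin.succAbove_right_injective h)))
    (fun k => by
      rw [hrs2 k]
      have := hoff (i.succAbove k) i (Fin.succAbove_ne i k)
      have := hrs (i.succAbove k)
      omega) h2
  apply hdet
  -- rows in T have zero full row sum and zero entry in column i
  have hzero : ∀ k ∈ T, (∑ l, M (i.succAbove k) l = 0) ∧ M (i.succAbove k) i = 0 := by
    intro k hk
    have h1 := hT1 k hk
    rw [hrs2 k] at h1
    have := hoff (i.succAbove k) i (Fin.succAbove_ne i k)
    have := hrs (i.succAbove k)
    constructor <;> omega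
  apply det_eq_zero_of_ungrounded M hsym (T.image i.succAbove) (hTne.image _)
  · intro t ht
    obtain ⟨k, hk, rfl⟩ := Finset.mem_image.mp ht
    exact (hzero k hk).1
  · intro t ht l hl
    obtain ⟨k, hk, rfl⟩ := Finset.mem_image.mp ht
    by_cases hli : l = i
    · rw [hli]
      exact (hzero k hk).2
    · obtain ⟨l', rfl⟩ := Fin.exists_succAbove_eq hli
      have hl' : l' ∉ T := fun h => hl (Finset.mem_image_of_mem _ h)
      exact hT2 k hk l' hl'

/-- Main determinant inequality: `det M ≥ max(𝟙ᵀM𝟙, 2)`. -/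
lemma detF : ∀ (p : ℕ) (M : Matrix (Fin (p+1)) (Fin (p+1)) ℤ),
    (∀ k l, M k l = M l k) → (∀ k l, k ≠ l → M k l ≤ 0) →
    (∀ k, 0 ≤ ∑ l, M k l) → (∀ k, 2 ≤ M k k) → M.det ≠ 0 →
    (∑ k, ∑ l, M k l) ≤ M.det ∧ 2 ≤ M.det := by
  intro p
  induction p with
  | zero =>
    intro M _ _ _ hdiag _
    have hsum : ∑ k : Fin 1, ∑ l : Fin 1, M k l = M 0 0 := by
      simp [Fin.sum_univ_one]
    rw [Matrix.det_fin_one, hsum]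
    exact ⟨le_refl _, hdiag 0⟩
  | succ p ih =>
    intro M hsym hoff hrs hdiag hdet
    obtain ⟨i, hine⟩ : ∃ i, ∑ l, M i l ≠ 0 := by
      by_contra h
      push_neg at h
      exact hdet (det_eq_zero_of_rowsums_zero M h)
    have ha : 1 ≤ ∑ l, M i l := by
      have := hrs i
      omega
    set a := ∑ l, M i l with haa
    set M2 := M.submatrix i.succAbove i.succAbove with hM2
    have hsym2 : ∀ k l, M2 k l = M2 l k := fun k l => hsym _ _
    have hoff2 : ∀ k l, k ≠ l → M2 k l ≤ 0 :=
      fun k l hkl => hoff _ _ (fun h => hkl (Fin.succAbove_right_injective h))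
    have hrs2' : ∀ k, ∑ l, M2 k l = (∑ l, M (i.succAbove k) l) - M (i.succAbove k) i := by
      intro k
      rw [hM2, Fin.sum_univ_succAbove (fun l => M (i.succAbove k) l) i]
      simp
    have hrs2 : ∀ k, 0 ≤ ∑ l, M2 k l := by
      intro k
      rw [hrs2' k]
      have := hoff (i.succAbove k) i (Fin.succAbove_ne i k)
      have := hrs (i.succAbove k)
      omega
    have hdiag2 : ∀ k, 2 ≤ M2 k k := fun k => hdiag _
    have hdet2 : M2.det ≠ 0 := det_submatrix_ne_zero M hsym hoff hrs hdet i
    obtain ⟨ihS, ih2⟩ := ih M2 hsym2 hoff2 hrs2 hdiag2 hdet2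
    -- total sum identity
    have hcol : ∑ k, M k i = a := by
      rw [haa]
      exact Finset.sum_congr rfl fun k _ => hsym k i
    have hS2 : ∑ k, ∑ l, M2 k l = (∑ k, ∑ l, M k l) - 2 * a + M i i := by
      have h1 : ∑ k, ∑ l, M k l = a + ∑ k, ∑ l, M (i.succAbove k) l := by
        rw [Fin.sum_univ_succAbove (fun k => ∑ l, M k l) i, haa]
      have h2 : ∑ k, ∑ l, M (i.succAbove k) l
          = (∑ k, M (i.succAbove k) i) + ∑ k, ∑ l, M2 k l := by
        rw [← Finset.sum_add_distrib]
        refine Finset.sum_congr rfl fun k _ => ?_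
        rw [hrs2' k]
        ring
      have h3 : ∑ k, M (i.succAbove k) i = a - M i i := by
        have := Fin.sum_univ_succAbove (fun k => M k i) i
        omega
      omega
    -- the stripped matrix has nonnegative determinant
    have hM0 : 0 ≤ (M.updateRow i (fun l => M i l - a * (Pi.single i 1 : Fin (p+2) → ℤ) l)).det := by
      apply detE
      · intro k l hkl
        by_cases hk : k = i
        · have hil : i ≠ l := hk ▸ hkl
          rw [hk, Matrix.updateRow_self]
          have h0 : (Pi.single i 1 : Fin (p+2) → ℤ) l = 0 := Pi.single_eq_of_ne (Ne.symm hil) 1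
          rw [h0]
          simpa using hoff i l hil
        · simpa [Matrix.updateRow_ne hk] using hoff k l hkl
      · intro k
        by_cases hk : k = i
        · rw [hk, Matrix.updateRow_self, Finset.sum_sub_distrib]
          have h1 : ∑ l, a * (Pi.single i 1 : Fin (p+2) → ℤ) l = a := by
            rw [← Finset.mul_sum]
            simp [Pi.single_apply, Finset.sum_ite_eq']
          rw [h1]
          omega
        · rw [Matrix.updateRow_ne hk]  -- note: entries are M k l
          exact hrs k
    have hsplit := det_split M i a
    -- final arithmetic
    set S := ∑ k, ∑ l, M k l with hSS
    have hMii := hdiag i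
    constructor
    · rcases le_or_gt (2 * a) S with h | h
      · have h4 : S - 2*a + 2 ≤ M2.det := by omega
        have h5 : a * (S - 2*a + 2) ≤ a * M2.det :=
          mul_le_mul_of_nonneg_left h4 (by omega)
        nlinarith
      · have h5 : a * 2 ≤ a * M2.det := mul_le_mul_of_nonneg_left ih2 (by omega)
        nlinarith
    · have h5 : a * 2 ≤ a * M2.det := mul_le_mul_of_nonneg_left ih2 (by omega)
      nlinarith

lemma sigma_one_le {r : ℕ} {σ : Fin r → ℤ} (h : IsChangemaker σ) (t : Fin r) : 1 ≤ σ t := by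
  have H : ∀ nv : ℕ, ∀ t : Fin r, t.val ≤ nv → 1 ≤ σ t := by
    intro nv
    induction nv with
    | zero =>
      intro t ht
      exact le_of_eq (h.1 t (Nat.le_zero.mp ht)).symm
    | succ nv ih =>
      intro t ht
      rcases Nat.eq_zero_or_pos t.val with h0 | hp
      · exact le_of_eq (h.1 t h0).symm
      · have h1 := (h.2 t hp).1
        have h2 : 1 ≤ σ ⟨t.val - 1, lt_of_le_of_lt (Nat.sub_le _ _) t.isLt⟩ :=
          ih _ (by show t.val - 1 ≤ nv; omega)
        linarith
  exact H t.val t le_rfl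

lemma two_le_selfdot {r : ℕ} {σ u : Fin r → ℤ} (hσ : ∀ t, 1 ≤ σ t)
    (hperp : ∑ t, σ t * u t = 0) (hu : u ≠ 0) : 2 ≤ ∑ t, u t * u t := by
  obtain ⟨t0, ht0⟩ : ∃ t, u t ≠ 0 := by
    by_contra h
    push_neg at h
    exact hu (funext h)
  by_contra hlt
  push_neg at hlt
  have h1 : 1 ≤ u t0 * u t0 := by
    nlinarith [Int.one_le_abs ht0, abs_mul_abs_self (u t0)]
  have hge : u t0 * u t0 ≤ ∑ t, u t * u t :=
    Finset.single_le_sum (fun t _ => mul_self_nonneg (u t)) (Finset.mem_univ t0)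
  have hrest : ∑ t ∈ Finset.univ.erase t0, u t * u t = 0 := by
    have h2 : (∑ t ∈ Finset.univ.erase t0, u t * u t) + u t0 * u t0 = ∑ t, u t * u t :=
      Finset.sum_erase_add Finset.univ (fun t => u t * u t) (Finset.mem_univ t0)
    have h3 : 0 ≤ ∑ t ∈ Finset.univ.erase t0, u t * u t :=
      Finset.sum_nonneg fun t _ => mul_self_nonneg (u t)
    omega
  have hzero : ∀ t, t ≠ t0 → u t = 0 := by
    intro t ht
    have h := (Finset.sum_eq_zero_iff_of_nonneg
      (fun t _ => mul_self_nonneg (u t))).mp hrest t (Finset.mem_erase.mpr ⟨ht, Finset.mem_univ t⟩)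
    exact mul_self_eq_zero.mp h
  have hps : ∑ t, σ t * u t = σ t0 * u t0 := by
    rw [Finset.sum_eq_single t0]
    · intro t _ ht
      rw [hzero t ht, mul_zero]
    · intro h
      exact absurd (Finset.mem_univ t0) h
  rw [hps] at hperp
  rcases mul_eq_zero.mp hperp with h | h
  · have := hσ t0
    omega
  · exact ht0 h

lemma key_dot {m : ℕ} {σ : Fin (m+1) → ℤ} (hσ0 : σ 0 = 1) {x y : Fin (m+1) → ℤ}
    (hx : ∑ t, σ t * x t = 0) (hy : ∑ t, σ t * y t = 0) :
    ∑ t, x t * y t = (∑ b : Fin m, x b.succ * y b.succ)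
      + (∑ b : Fin m, x b.succ * σ b.succ) * (∑ b : Fin m, σ b.succ * y b.succ) := by
  rw [Fin.sum_univ_succ (f := fun t => σ t * x t), hσ0, one_mul] at hx
  rw [Fin.sum_univ_succ (f := fun t => σ t * y t), hσ0, one_mul] at hy
  rw [Fin.sum_univ_succ (f := fun t => x t * y t)]
  have hx0 : x 0 = -∑ b : Fin m, σ b.succ * x b.succ := by linarith
  have hy0 : y 0 = -∑ b : Fin m, σ b.succ * y b.succ := by linarith
  have hcomm : ∑ b : Fin m, x b.succ * σ b.succ = ∑ b : Fin m, σ b.succ * x b.succ :=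
    Finset.sum_congr rfl fun _ _ => mul_comm _ _
  rw [hx0, hy0, hcomm]
  ring

lemma bvec_perp {p : ℕ} (σ : Fin (p+2) → ℤ) (hσ0 : σ 0 = 1) (kk : Fin (p+1)) :
    ∑ t, σ t * (if t = 0 then -σ kk.succ else if t = kk.succ then 1 else 0) = 0 := by
  rw [Fin.sum_univ_succ
    (f := fun t => σ t * (if t = 0 then -σ kk.succ else if t = kk.succ then 1 else 0))]
  rw [if_pos rfl, hσ0, one_mul]
  have hterm : ∀ b : Fin (p+1),
      σ b.succ * (if (b.succ : Fin (p+2)) = 0 then -σ kk.succ else if b.succ = kk.succ then 1 else 0)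
      = (if b = kk then σ b.succ else 0) := by
    intro b
    rw [if_neg (Fin.succ_ne_zero b)]
    by_cases h : b = kk
    · rw [if_pos (by rw [h]), if_pos h, mul_one]
    · rw [if_neg (fun hs => h (Fin.succ_injective _ hs)), if_neg h, mul_zero]
  rw [Finset.sum_congr rfl fun b _ => hterm b,
    Finset.sum_ite_eq' Finset.univ kk (fun b => σ b.succ), if_pos (Finset.mem_univ kk)]
  ring

lemma bvec_tail {p : ℕ} (σ : Fin (p+2) → ℤ) (kk l : Fin (p+1)) :
    (if (l.succ : Fin (p+2)) = 0 then -σ kk.succ else if l.succ = kk.succ then (1:ℤ) else 0)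
      = (if kk = l then 1 else 0) := by
  rw [if_neg (Fin.succ_ne_zero l)]
  by_cases h : l = kk
  · rw [if_pos (by rw [h]), if_pos h.symm]
  · rw [if_neg (fun hs => h (Fin.succ_injective _ hs)), if_neg (fun hs => h hs.symm)]



lemma selfdot_le {m : ℕ} (σ : Fin (m+1) → ℤ) (hcm : IsChangemaker σ)
    (v : Fin (m+1) → (Fin (m+1) → ℤ))
    (hv : IsObtuseSuperbase {x : Fin (m+1) → ℤ | dotInt σ x = 0} v) (j : Fin (m+1)) :
    dotInt (v j) (v j) ≤ ∑ i, σ i ^ 2 := by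
  obtain ⟨hmem, hspan, hobt, hsum⟩ := hv
  have hσ1 : ∀ t, 1 ≤ σ t := sigma_one_le hcm
  have hσ0 : σ 0 = 1 := hcm.1 0 rfl
  have hperp : ∀ i, ∑ t, σ t * v i t = 0 := fun i => hmem i
  have hvs : ∀ t, ∑ b, v (j.succAbove b) t = -(v j t) := by
    intro t
    have h0 : ∑ i, v i t = 0 := by
      have h1 := congrFun hsum t
      simpa [Finset.sum_apply] using h1
    rw [Fin.sum_univ_succAbove (fun i => v i t) j] at h0
    linarith
  cases m with
  | zero =>
    have hvj : v j = 0 := by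
      funext t
      have h := hperp j
      have ht : t = 0 := by omega
      rw [Fin.sum_univ_one] at h
      rw [hσ0, one_mul] at h
      rw [ht]
      exact h
    rw [hvj]
    have h0 : dotInt (0 : Fin 1 → ℤ) 0 = 0 := by simp [dotInt]
    rw [h0]
    exact Finset.sum_nonneg fun i _ => sq_nonneg (σ i)
  | succ p =>
    set sA := j.succAbove with hsA
    set G : Matrix (Fin (p+1)) (Fin (p+1)) ℤ :=
      fun a b => dotInt (v (sA a)) (v (sA b)) with hG
    set σp : Fin (p+1) → ℤ := fun b => σ b.succ with hσp
    set C : Matrix (Fin (p+1)) (Fin (p+1)) ℤ := fun a b => v (sA a) b.succ with hC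
    set A : Matrix (Fin (p+1)) (Fin (p+1)) ℤ :=
      fun a b => (if a = b then 1 else 0) + σp a * σp b with hA
    -- row sums of G
    have hGrow : ∀ a, ∑ b, G a b = -dotInt (v (sA a)) (v j) := by
      intro a
      calc ∑ b, G a b = ∑ b, ∑ t, v (sA a) t * v (sA b) t := by simp only [hG, dotInt]
        _ = ∑ t, ∑ b, v (sA a) t * v (sA b) t := Finset.sum_comm
        _ = ∑ t, v (sA a) t * ∑ b, v (sA b) t :=
            Finset.sum_congr rfl fun t _ => (Finset.mul_sum _ _ _).symm
        _ = ∑ t, v (sA a) t * (-(v j t)) :=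
            Finset.sum_congr rfl fun t _ => by rw [hvs t]
        _ = -∑ t, v (sA a) t * v j t := by simp [mul_neg]
        _ = -dotInt (v (sA a)) (v j) := by simp only [dotInt]
    -- total sum of G
    have hGS : ∑ a, ∑ b, G a b = dotInt (v j) (v j) := by
      calc ∑ a, ∑ b, G a b = ∑ a, -dotInt (v (sA a)) (v j) :=
            Finset.sum_congr rfl fun a _ => hGrow a
        _ = -∑ a, ∑ t, v (sA a) t * v j t := by simp [dotInt]
        _ = -∑ t, ∑ a, v (sA a) t * v j t := by rw [Finset.sum_comm]
        _ = -∑ t, (∑ a, v (sA a) t) * v j t :=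
            congrArg _ (Finset.sum_congr rfl fun t _ => (Finset.sum_mul _ _ _).symm)
        _ = -∑ t, (-(v j t)) * v j t :=
            congrArg _ (Finset.sum_congr rfl fun t _ => by rw [hvs t])
        _ = ∑ t, v j t * v j t := by simp [neg_mul]
        _ = dotInt (v j) (v j) := by simp only [dotInt]
    -- G = C * A * Cᵀ
    have hkeyG : ∀ a b, G a b = (∑ l, C a l * C b l)
        + (∑ l, C a l * σp l) * (∑ l, σp l * C b l) := by
      intro a b
      simp only [hG, hC, hσp, dotInt]
      exact key_dot hσ0 (hperp (sA a)) (hperp (sA b))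
    have hCA : ∀ a l, (C * A) a l = C a l + (∑ kk, C a kk * σp kk) * σp l := by
      intro a l
      rw [Matrix.mul_apply]
      have hterm : ∀ kk, C a kk * A kk l
          = (if kk = l then C a kk else 0) + (C a kk * σp kk) * σp l := by
        intro kk
        simp only [hA]
        by_cases h : kk = l
        · rw [if_pos h, if_pos h]; ring
        · rw [if_neg h, if_neg h]; ring
      rw [Finset.sum_congr rfl fun kk _ => hterm kk, Finset.sum_add_distrib,
        Finset.sum_ite_eq' Finset.univ l (C a), if_pos (Finset.mem_univ l), ← Finset.sum_mul]
    have hGCA : G = C * A * Cᵀ := by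
      funext a b
      have h1 : (C * A * Cᵀ) a b
          = (∑ l, C a l * C b l) + (∑ kk, C a kk * σp kk) * (∑ l, σp l * C b l) := by
        rw [Matrix.mul_apply]
        calc ∑ l, (C * A) a l * Cᵀ l b
            = ∑ l, (C a l * C b l + (∑ kk, C a kk * σp kk) * (σp l * C b l)) := by
              refine Finset.sum_congr rfl fun l _ => ?_
              rw [hCA a l, Matrix.transpose_apply]
              ring
          _ = _ := by rw [Finset.sum_add_distrib, ← Finset.mul_sum]
      rw [h1, hkeyG a b]
    -- determinant of A
    have hAform : A = 1 + Matrix.replicateCol Unit σp * Matrix.replicateRow Unit σp := by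
      funext a b
      simp [hA, Matrix.mul_apply, Matrix.one_apply, Matrix.replicateCol_apply, Matrix.replicateRow_apply,
        Fintype.sum_unique]
    have hdetA : A.det = ∑ i, σ i ^ 2 := by
      rw [hAform, Matrix.det_one_add_replicateCol_mul_replicateRow]
      rw [Fin.sum_univ_succ (f := fun i => σ i ^ 2), hσ0]
      simp only [dotProduct, hσp]
      have hsq : ∀ b : Fin (p+1), σ b.succ * σ b.succ = σ b.succ ^ 2 :=
        fun b => (pow_two _).symm
      rw [Finset.sum_congr rfl fun b _ => hsq b]
      ring
    -- spanning: D * C = 1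
    have hbase : ∀ kk : Fin (p+1), ∃ c : Fin (p+2) → ℤ,
        ∑ i, c i • v i
          = fun t => if t = 0 then -σ kk.succ else if t = kk.succ then 1 else 0 := by
      intro kk
      apply (Submodule.mem_span_range_iff_exists_fun ℤ).mp
      exact hspan _ (bvec_perp σ hσ0 kk)
    choose c hc using hbase
    set D : Matrix (Fin (p+1)) (Fin (p+1)) ℤ := fun kk a => c kk (sA a) - c kk j with hD
    have hDC : D * C = 1 := by
      funext kk l
      rw [Matrix.mul_apply, Matrix.one_apply]
      have hsum2 : ∑ a, (c kk (sA a) - c kk j) • v (sA a)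
          = fun t => if t = 0 then -σ kk.succ else if t = kk.succ then (1:ℤ) else 0 := by
        have h1 := hc kk
        rw [Fin.sum_univ_succAbove (fun i => c kk i • v i) j] at h1
        have h4 := eq_sub_of_add_eq' h1
        have h2 : ∑ a, (c kk (sA a) - c kk j) • v (sA a)
            = (∑ a, c kk (sA a) • v (sA a)) - c kk j • (∑ a, v (sA a)) := by
          rw [Finset.smul_sum, ← Finset.sum_sub_distrib]
          exact Finset.sum_congr rfl fun a _ => sub_smul _ _ _
        have h3 : ∑ a, v (sA a) = -(v j) := by
          funext t
          rw [Finset.sum_apply]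
          simpa using hvs t
        rw [h2, h4, h3]
        simp [smul_neg]
      have h5 := congrFun hsum2 l.succ
      rw [Finset.sum_apply] at h5
      simp only [Pi.smul_apply, smul_eq_mul] at h5
      rw [bvec_tail σ kk l] at h5
      exact h5
    have hdetC : IsUnit C.det :=
      IsUnit.of_mul_eq_one (a := C.det) D.det
        (by rw [mul_comm, ← Matrix.det_mul, hDC, Matrix.det_one])
    have hCC : C.det * C.det = 1 := by
      rcases Int.isUnit_iff.mp hdetC with h | h <;> rw [h] <;> norm_num
    have hdetG : G.det = ∑ i, σ i ^ 2 := by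
      rw [hGCA, Matrix.det_mul, Matrix.det_mul, Matrix.det_transpose, hdetA]
      linear_combination (∑ i, σ i ^ 2) * hCC
    -- the superbase vectors are nonzero
    have hvnz : ∀ a, v (sA a) ≠ 0 := by
      intro a hva
      have hCz : C.det = 0 := Matrix.det_eq_zero_of_row_eq_zero a (fun l => by
        show v (sA a) l.succ = 0
        rw [hva]
        rfl)
      rw [hCz] at hdetC
      exact absurd (Int.isUnit_iff.mp hdetC) (by norm_num)
    have hn1 : 1 ≤ ∑ i, σ i ^ 2 := by
      have h1 : σ 0 ^ 2 ≤ ∑ i, σ i ^ 2 :=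
        Finset.single_le_sum (fun i _ => sq_nonneg (σ i)) (Finset.mem_univ 0)
      rw [hσ0] at h1
      simpa using h1
    -- apply the determinant inequality
    have hmain := detF p G
      (fun k l => Finset.sum_congr rfl fun t _ => mul_comm _ _)
      (fun k l hkl => hobt (sA k) (sA l) (fun h => hkl (Fin.succAbove_right_injective h)))
      (fun k => by
        rw [hGrow k]
        have := hobt (sA k) j (Fin.succAbove_ne j k)
        omega)
      (fun k => two_le_selfdot hσ1 (hperp (sA k)) (hvnz k))
      (by rw [hdetG]; omega)
    calc dotInt (v j) (v j) = ∑ a, ∑ b, G a b := hGS.symm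
      _ ≤ G.det := hmain.1
      _ = ∑ i, σ i ^ 2 := hdetG

end ObtuseAux


theorem obtuse_superbase_cauchy_schwarz_bound
    (r : ℕ) (hr : 0 < r) (σ : Fin r → ℤ) (hcm : IsChangemaker σ)
    (v : Fin r → (Fin r → ℤ))
    (hv : IsObtuseSuperbase {x : Fin r → ℤ | dotInt σ x = 0} v) :
    ∀ j k : Fin r, (v j k) ^ 2 + (σ k) ^ 2 ≤ ∑ i, (σ i) ^ 2 := by
  obtain ⟨m, rfl⟩ : ∃ m, r = m + 1 := ⟨r - 1, by omega⟩
  intro j k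
  have hσ1 : ∀ t, 1 ≤ σ t := ObtuseAux.sigma_one_le hcm
  set n := ∑ i, σ i ^ 2 with hn
  have hσk2 : σ k ^ 2 ≤ n :=
    Finset.single_le_sum (fun i _ => sq_nonneg (σ i)) (Finset.mem_univ k)
  have hn1 : (1:ℤ) ≤ n := le_trans (by nlinarith [hσ1 k]) hσk2
  have hnorm : dotInt (v j) (v j) ≤ n := ObtuseAux.selfdot_le σ hcm v hv j
  have hperpj : ∑ t, σ t * v j t = 0 := hv.1 j
  set u : Fin (m+1) → ℤ := fun t => n * (if t = k then 1 else 0) - σ k * σ t with hu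
  have e1 : ∑ t, v j t * u t = n * v j k := by
    have hterm : ∀ t, v j t * u t
        = (if t = k then n * v j t else 0) - σ k * (σ t * v j t) := by
      intro t
      simp only [hu]
      by_cases h : t = k
      · rw [if_pos h, if_pos h]; ring
      · rw [if_neg h, if_neg h]; ring
    rw [Finset.sum_congr rfl fun t _ => hterm t, Finset.sum_sub_distrib,
      Finset.sum_ite_eq' Finset.univ k (fun t => n * v j t), if_pos (Finset.mem_univ k),
      ← Finset.mul_sum, hperpj]
    ring
  have e2 : ∑ t, u t ^ 2 = n * (n - σ k ^ 2) := by
    have hterm : ∀ t, u t ^ 2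
        = (if t = k then n ^ 2 - 2 * n * (σ k * σ t) else 0) + σ k ^ 2 * σ t ^ 2 := by
      intro t
      simp only [hu]
      by_cases h : t = k
      · rw [if_pos h, if_pos h]; ring
      · rw [if_neg h, if_neg h]; ring
    rw [Finset.sum_congr rfl fun t _ => hterm t, Finset.sum_add_distrib,
      Finset.sum_ite_eq' Finset.univ k (fun t => n ^ 2 - 2 * n * (σ k * σ t)),
      if_pos (Finset.mem_univ k), ← Finset.mul_sum, ← hn]
    ring
  have hCS := Finset.sum_mul_sq_le_sq_mul_sq Finset.univ (v j) u
  rw [e1, e2] at hCS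
  have hvv : ∑ t, v j t ^ 2 = dotInt (v j) (v j) :=
    Finset.sum_congr rfl fun t _ => pow_two _
  rw [hvv] at hCS
  have h3 : dotInt (v j) (v j) * (n * (n - σ k ^ 2)) ≤ n * (n * (n - σ k ^ 2)) :=
    mul_le_mul_of_nonneg_right hnorm (by nlinarith)
  have h4 : n ^ 2 * (v j k ^ 2) ≤ n ^ 2 * (n - σ k ^ 2) := by nlinarith
  have h5 : v j k ^ 2 ≤ n - σ k ^ 2 :=
    le_of_mul_le_mul_left h4 (by nlinarith)
  linarith
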